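/- Define u_0(n) = ln W(n) − 1/2 + (1/2)ln π − (n+1/3)·ln(1 − 1/(2(n+1/3))) + (1/2)ln n, where W(n) = (2n−1)!!/(2n)!!. Then lim_{n→∞} n^4 (u_0(n) − u_0(n+1)) = 1/48. -/

import Mathlib

open Real Filter Topology

/-- The Wallis ratio W(n) = (2n-1)!!/(2n)!!. -/
noncomputable def W (n : ℕ) : ℝ :=
  (∏ k ∈ Finset.range n, (2 * (k : ℝ) + 1)) / (∏ k ∈ Finset.range n, (2 * (k : ℝ) + 2))

noncomputable def u0 (n : ℕ) : ℝ :=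
  Real.log (W n) - 1 / 2 + (1 / 2) * Real.log π -
    ((n : ℝ) + 1 / 3) * Real.log (1 - 1 / (2 * ((n : ℝ) + 1 / 3))) +
    (1 / 2) * Real.log n

noncomputable def P5 (x : ℝ) : ℝ := x + x^2/2 + x^3/3 + x^4/4 + x^5/5

noncomputable def Fn (t : ℝ) : ℝ :=
  2048/3 + (1503232/135)*t + (7052288/81)*t^2 + (3870208/9)*t^3 + (1085840896/729)*t^4
  + (41638312448/10935)*t^5 + (80765325824/10935)*t^6 + (217214074880/19683)*t^7
  + (755329627136/59049)*t^8 + (226598392832/19683)*t^9 + (2363393554432/295245)*t^10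
  + (1254948529664/295245)*t^11 + (33240121856/19683)*t^12 + (28655062528/59049)*t^13
  + (5617671680/59049)*t^14 + (124361728/10935)*t^15 + (36884480/59049)*t^16

noncomputable def G (t : ℝ) : ℝ := Fn t / ((2+2*t)*(2+(2/3)*t)*(2+(8/3)*t)*(1+t))^5

noncomputable def Rp (x : ℝ) : ℝ :=
  P5 (1/(2*x+2)) + (x+1/3) * P5 (1/(2*x+2/3)) - (x+4/3) * P5 (1/(2*x+8/3))
      - (1/2) * P5 (1/(x+1))

set_option maxHeartbeats 1000000 in
lemma alg (x : ℝ) (hx : 1 ≤ x) : x^4 * Rp x = G (1/x) := by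
  have h0 : x ≠ 0 := by linarith
  have h1 : 2*x+2 ≠ 0 := by linarith
  have h2 : 2*x+2/3 ≠ 0 := by linarith
  have h3 : 2*x+8/3 ≠ 0 := by linarith
  have h4 : x+1 ≠ 0 := by linarith
  simp only [Rp, P5, G, Fn]
  field_simp
  ring

lemma W_pos (n : ℕ) : 0 < W n := by
  unfold W
  apply div_pos <;> (apply Finset.prod_pos; intro i _; positivity)

lemma W_succ (n : ℕ) : W (n+1) = W n * ((2*(n:ℝ)+1)/(2*(n:ℝ)+2)) := by
  unfold W
  rw [Finset.prod_range_succ, Finset.prod_range_succ, div_mul_div_comm]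

lemma logform (n : ℕ) (hn : 1 ≤ n) :
    u0 n - u0 (n+1) =
      -Real.log (1 - 1/(2*(n:ℝ)+2)) - ((n:ℝ)+1/3) * Real.log (1 - 1/(2*(n:ℝ)+2/3))
        + ((n:ℝ)+4/3) * Real.log (1 - 1/(2*(n:ℝ)+8/3))
        + (1/2) * Real.log (1 - 1/((n:ℝ)+1)) := by
  have hx : (1:ℝ) ≤ (n:ℝ) := by exact_mod_cast hn
  have hx0 : (0:ℝ) < (n:ℝ) := by linarith
  have hW := W_pos n
  have hfrac : (0:ℝ) < (2*(n:ℝ)+1)/(2*(n:ℝ)+2) := by positivity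
  have hlog : Real.log (W (n+1)) = Real.log (W n) + Real.log (1 - 1/(2*(n:ℝ)+2)) := by
    rw [W_succ, Real.log_mul hW.ne' hfrac.ne']
    congr 1
    congr 1
    field_simp
    ring
  have h2 : Real.log (n:ℝ) - Real.log ((n:ℝ)+1) = Real.log (1 - 1/((n:ℝ)+1)) := by
    rw [show (1:ℝ) - 1/((n:ℝ)+1) = (n:ℝ)/((n:ℝ)+1) by field_simp; ring,
      Real.log_div hx0.ne' (by linarith)]
  simp only [u0]
  push_cast
  rw [hlog]
  rw [show ((n:ℝ) + 1 + 1/3) = (n:ℝ) + 4/3 by ring]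
  rw [show (2:ℝ)*((n:ℝ)+4/3) = 2*(n:ℝ)+8/3 by ring]
  rw [show (2:ℝ)*((n:ℝ)+1/3) = 2*(n:ℝ)+2/3 by ring]
  linarith [h2]

lemma Lbound {y : ℝ} (h0 : 0 ≤ y) (h2 : y ≤ 1/2) : |Real.log (1-y) + P5 y| ≤ 2*y^6 := by
  have h1 : |y| < 1 := by rw [abs_of_nonneg h0]; linarith
  have H := Real.abs_log_sub_add_sum_range_le h1 5
  rw [abs_of_nonneg h0] at H
  have hs : (∑ i ∈ Finset.range 5, y ^ (i+1) / (i+1)) = P5 y := by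
    simp [Finset.sum_range_succ, P5]
    norm_num
  rw [hs, add_comm] at H
  norm_num at H
  refine H.trans ?_
  rw [div_le_iff₀ (by linarith : (0:ℝ) < 1 - y)]
  nlinarith [mul_nonneg (pow_nonneg h0 6) (by linarith : (0:ℝ) ≤ 1 - 2*y)]

set_option maxHeartbeats 1000000 in
theorem u0_diff_limit :
    Tendsto (fun n : ℕ => (n : ℝ) ^ 4 * (u0 n - u0 (n + 1))) atTop (nhds (1 / 48)) := by
  have hGcont : ContinuousAt G 0 := by
    unfold G Fn
    exact ContinuousAt.div (by fun_prop) (by fun_prop) (by norm_num)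
  have hG0 : G 0 = 1/48 := by norm_num [G, Fn]
  have hA : Tendsto (fun n : ℕ => G (1/(n:ℝ))) atTop (𝓝 (1/48)) := by
    rw [← hG0]
    exact hGcont.tendsto.comp tendsto_one_div_atTop_nhds_zero_nat
  have hB : Tendsto (fun n : ℕ => (n:ℝ)^4 * ((u0 n - u0 (n+1)) - Rp (n:ℝ))) atTop (𝓝 0) := by
    apply squeeze_zero_norm' (a := fun n : ℕ => 11/(n:ℝ))
    · filter_upwards [eventually_ge_atTop 1] with n hn
      have hx : (1:ℝ) ≤ (n:ℝ) := by exact_mod_cast hn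
      have hx0 : (0:ℝ) < (n:ℝ) := by linarith
      set x : ℝ := (n:ℝ) with hxdef
      set y1 : ℝ := 1/(2*x+2) with hy1
      set y2 : ℝ := 1/(2*x+2/3) with hy2
      set y3 : ℝ := 1/(2*x+8/3) with hy3
      set y4 : ℝ := 1/(x+1) with hy4
      have hy10 : 0 ≤ y1 := by rw [hy1]; positivity
      have hy20 : 0 ≤ y2 := by rw [hy2]; positivity
      have hy30 : 0 ≤ y3 := by rw [hy3]; positivity
      have hy40 : 0 ≤ y4 := by rw [hy4]; positivity
      have hy1h : y1 ≤ 1/2 := by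
        rw [hy1]; exact one_div_le_one_div_of_le (by norm_num) (by linarith)
      have hy2h : y2 ≤ 1/2 := by
        rw [hy2]; exact one_div_le_one_div_of_le (by norm_num) (by linarith)
      have hy3h : y3 ≤ 1/2 := by
        rw [hy3]; exact one_div_le_one_div_of_le (by norm_num) (by linarith)
      have hy4h : y4 ≤ 1/2 := by
        rw [hy4]; exact one_div_le_one_div_of_le (by norm_num) (by linarith)
      have hy1x : y1 ≤ 1/x := by
        rw [hy1]; exact one_div_le_one_div_of_le hx0 (by linarith)
      have hy2x : y2 ≤ 1/x := by
        rw [hy2]; exact one_div_le_one_div_of_le hx0 (by linarith)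
      have hy3x : y3 ≤ 1/x := by
        rw [hy3]; exact one_div_le_one_div_of_le hx0 (by linarith)
      have hy4x : y4 ≤ 1/x := by
        rw [hy4]; exact one_div_le_one_div_of_le hx0 (by linarith)
      obtain ⟨a1, b1⟩ := abs_le.mp (Lbound hy10 hy1h)
      obtain ⟨a2, b2⟩ := abs_le.mp (Lbound hy20 hy2h)
      obtain ⟨a3, b3⟩ := abs_le.mp (Lbound hy30 hy3h)
      obtain ⟨a4, b4⟩ := abs_le.mp (Lbound hy40 hy4h)
      have p2 : (0:ℝ) ≤ x + 1/3 := by linarith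
      have p3 : (0:ℝ) ≤ x + 4/3 := by linarith
      have hErrEq : (u0 n - u0 (n+1)) - Rp x =
          -(Real.log (1-y1) + P5 y1) - (x+1/3)*(Real.log (1-y2) + P5 y2)
            + (x+4/3)*(Real.log (1-y3) + P5 y3) + (1/2)*(Real.log (1-y4) + P5 y4) := by
        rw [logform n hn]
        simp only [Rp, hy1, hy2, hy3, hy4, hxdef]
        ring
      have hErrB : |(u0 n - u0 (n+1)) - Rp x| ≤
          2*y1^6 + (x+1/3)*(2*y2^6) + (x+4/3)*(2*y3^6) + (1/2)*(2*y4^6) := by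
        rw [hErrEq]
        have m2u := mul_le_mul_of_nonneg_left b2 p2
        have m2l := mul_le_mul_of_nonneg_left a2 p2
        have m3u := mul_le_mul_of_nonneg_left b3 p3
        have m3l := mul_le_mul_of_nonneg_left a3 p3
        rw [abs_le]
        constructor <;> linarith
      have h61 : y1^6 ≤ (1/x)^6 := pow_le_pow_left₀ hy10 hy1x 6
      have h62 : y2^6 ≤ (1/x)^6 := pow_le_pow_left₀ hy20 hy2x 6
      have h63 : y3^6 ≤ (1/x)^6 := pow_le_pow_left₀ hy30 hy3x 6
      have h64 : y4^6 ≤ (1/x)^6 := pow_le_pow_left₀ hy40 hy4x 6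
      have hB2 : 2*y1^6 + (x+1/3)*(2*y2^6) + (x+4/3)*(2*y3^6) + (1/2)*(2*y4^6)
          ≤ 11/x^5 := by
        have c2 := mul_le_mul_of_nonneg_left (by linarith : 2*y2^6 ≤ 2*(1/x)^6) p2
        have c3 := mul_le_mul_of_nonneg_left (by linarith : 2*y3^6 ≤ 2*(1/x)^6) p3
        have hsum : 2*(1/x)^6 + (x+1/3)*(2*(1/x)^6) + (x+4/3)*(2*(1/x)^6)
            + (1/2)*(2*(1/x)^6) = (4*x+19/3)/x^6 := by
          field_simp
          ring
        have hfin : (4*x+19/3)/x^6 ≤ 11/x^5 := by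
          rw [div_le_div_iff₀ (by positivity) (by positivity)]
          nlinarith [mul_le_mul_of_nonneg_left (show (19:ℝ)/3 ≤ 7*x by linarith)
            (le_of_lt (pow_pos hx0 5))]
        linarith
      rw [Real.norm_eq_abs, abs_mul, abs_of_nonneg (by positivity : (0:ℝ) ≤ x^4)]
      calc x^4 * |(u0 n - u0 (n+1)) - Rp x|
          ≤ x^4 * (11/x^5) := by
            apply mul_le_mul_of_nonneg_left _ (by positivity)
            exact hErrB.trans hB2
        _ = 11/x := by field_simp
    · exact tendsto_const_div_atTop_nhds_zero_nat 11
  have := hA.add hB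
  rw [add_zero] at this
  apply Tendsto.congr' _ this
  filter_upwards [eventually_ge_atTop 1] with n hn
  have hx : (1:ℝ) ≤ (n:ℝ) := by exact_mod_cast hn
  rw [← alg (n:ℝ) hx]
  ring
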